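/- For every fixed natural number L and every real number μ ≠ 0, the limit as the positive integer α tends to infinity of ∑_{J=0}^{2α} (2J+1)/(J(J+1)+μ²) · (P_L(1 − J²/(2α²)) − 1) exists and equals −2·h(L), where h(L) = ∑_{k=1}^{L} 1/k. -/

import Mathlib

open Filter Finset Polynomial

noncomputable def legendreP (L : ℕ) (x : ℝ) : ℝ :=
  (1 / ((2 : ℝ) ^ L * (Nat.factorial L : ℝ))) *
    iteratedDeriv L (fun t : ℝ => (t ^ 2 - 1) ^ L) x

lemma iteratedDeriv_poly (p : Polynomial ℝ) (n : ℕ) :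
    iteratedDeriv n (fun x => p.eval x) = fun x => (derivative^[n] p).eval x := by
  induction n with
  | zero => simp
  | succ n ih =>
    rw [iteratedDeriv_succ, ih, Function.iterate_succ_apply']
    funext x
    exact Polynomial.deriv _

lemma legendre_prod (L : ℕ) (x : ℝ) :
    legendreP L x = ∑ k ∈ range (L+1), ((L.choose k : ℝ))^2 * ((x-1)/2)^k * ((x+1)/2)^(L-k) := by
  have hf : (fun t : ℝ => (t ^ 2 - 1) ^ L) = fun t => Polynomial.eval t (((X - C 1) * (X + C 1))^L : Polynomial ℝ) := by
    funext t; simp; ring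
  rw [legendreP, hf, iteratedDeriv_poly]
  simp only [mul_pow, Polynomial.iterate_derivative_mul, Polynomial.eval_finset_sum]
  rw [Finset.mul_sum]
  refine Finset.sum_congr rfl fun k hk => ?_
  rw [mem_range] at hk
  have hk' : k ≤ L := by omega
  rw [Polynomial.iterate_derivative_X_sub_pow, Polynomial.iterate_derivative_X_add_pow]
  have hLL : L - (L - k) = k := by omega
  rw [hLL]
  simp only [smul_eq_mul, Polynomial.eval_smul, Polynomial.eval_mul, Polynomial.eval_natCast,
    Polynomial.eval_pow, Polynomial.eval_sub, Polynomial.eval_add, Polynomial.eval_X,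
    Polynomial.eval_one, Polynomial.eval_C, nsmul_eq_mul]
  have hd1 : (L.descFactorial (L-k) : ℝ) = ((L-k).factorial : ℝ) * (L.choose (L-k) : ℝ) := by
    exact_mod_cast congrArg (Nat.cast : ℕ → ℝ) (Nat.descFactorial_eq_factorial_mul_choose L (L-k))
  have hd2 : (L.descFactorial k : ℝ) = (k.factorial : ℝ) * (L.choose k : ℝ) := by
    exact_mod_cast congrArg (Nat.cast : ℕ → ℝ) (Nat.descFactorial_eq_factorial_mul_choose L k)
  have hsymm : (L.choose (L-k) : ℝ) = (L.choose k : ℝ) := by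
    exact_mod_cast congrArg (Nat.cast : ℕ → ℝ) (Nat.choose_symm hk')
  have hfac : (L.choose k : ℝ) * (k.factorial : ℝ) * ((L-k).factorial : ℝ) = (L.factorial : ℝ) := by
    exact_mod_cast congrArg (Nat.cast : ℕ → ℝ) (Nat.choose_mul_factorial_mul_factorial hk')
  have h2L : (2:ℝ)^L = 2^k * 2^(L-k) := by
    rw [← pow_add]; congr 1; omega
  have hfacpos : (0:ℝ) < (L.factorial : ℝ) := by exact_mod_cast Nat.factorial_pos L
  rw [hd1, hd2, hsymm, div_pow, div_pow, h2L]
  field_simp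
  linear_combination ((L.choose k:ℝ)^2 * (x-1)^k * (x+1)^(L-k)) * hfac

noncomputable def harmonicR (L : ℕ) : ℝ := ∑ k ∈ Finset.range L, 1 / ((k : ℝ) + 1)

lemma beta_sum (n : ℕ) : ∀ j : ℕ, 1 ≤ j →
    ∑ k ∈ range (n+1), (-1:ℝ)^k * (n.choose k) / ((k:ℝ) + (j:ℝ)) = 1 / ((j:ℝ) * ((n+j).choose j)) := by
  induction n with
  | zero => intro j hj; simp
  | succ n ih =>
    intro j hj
    have key : ∑ k ∈ range (n+2), (-1:ℝ)^k * ((n+1).choose k) / ((k:ℝ) + (j:ℝ))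
        = (∑ k ∈ range (n+1), (-1:ℝ)^k * (n.choose k) / ((k:ℝ) + (j:ℝ)))
          - ∑ k ∈ range (n+1), (-1:ℝ)^k * (n.choose k) / ((k:ℝ) + ((j:ℝ)+1)) := by
      rw [Finset.sum_range_succ' (fun k => (-1:ℝ)^k * ((n+1).choose k) / ((k:ℝ) + (j:ℝ))) (n+1)]
      have hsplit : ∀ k ∈ range (n+1),
          (-1:ℝ)^(k+1) * ((n+1).choose (k+1)) / (((k+1:ℕ):ℝ) + (j:ℝ))
          = ((-1:ℝ)^(k+1) * (n.choose (k+1)) / (((k+1:ℕ):ℝ) + (j:ℝ)))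
            - (-1:ℝ)^k * (n.choose k) / ((k:ℝ) + ((j:ℝ)+1)) := by
        intro k _
        rw [Nat.choose_succ_succ]
        push_cast
        ring
      rw [Finset.sum_congr rfl hsplit, Finset.sum_sub_distrib]
      have hlast : ((-1:ℝ)^(n+1) * (n.choose (n+1)) / (((n+1:ℕ):ℝ) + (j:ℝ))) = 0 := by
        simp [Nat.choose_succ_self]
      have hfirst : (-1:ℝ)^0 * ((n+1).choose 0) / (((0:ℕ):ℝ) + (j:ℝ))
          = (-1:ℝ)^0 * (n.choose 0) / (((0:ℕ):ℝ) + (j:ℝ)) := by simp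
      have hback : (∑ k ∈ range (n+1), (-1:ℝ)^(k+1) * (n.choose (k+1)) / (((k+1:ℕ):ℝ) + (j:ℝ)))
            + (-1:ℝ)^0 * ((n+1).choose 0) / (((0:ℕ):ℝ) + (j:ℝ))
          = ∑ k ∈ range (n+1), (-1:ℝ)^k * (n.choose k) / ((k:ℝ) + (j:ℝ)) := by
        rw [hfirst]
        rw [← Finset.sum_range_succ' (fun k => (-1:ℝ)^k * (n.choose k) / ((k:ℝ) + (j:ℝ))) (n+1)]
        rw [Finset.sum_range_succ, hlast, add_zero]
      linarith [hback]
    rw [key, ih j hj]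
    have ih2 := ih (j+1) (by omega)
    push_cast at ih2
    rw [ih2]
    have hA : (n + (j+1)).choose (j+1) = (n+j+1).choose (j+1) := by rw [show n+(j+1)=n+j+1 from rfl]
    have hA' : (n + 1 + j).choose j = (n+j+1).choose j := by rw [show n+1+j=n+j+1 by omega]
    rw [hA, hA']
    have e1 : ((j+1) * (n+j+1).choose (j+1) : ℕ) = (n+j+1) * (n+j).choose j := by
      rw [mul_comm ((j+1):ℕ)]
      exact (Nat.add_one_mul_choose_eq (n+j) j).symm
    have e2 : ((n+1) * (n+j+1).choose j : ℕ) = (n+j+1) * (n+j).choose j := by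
      have h := Nat.add_one_mul_choose_eq (n+j) n
      have hs : (n+j+1).choose (n+1) = (n+j+1).choose j := by
        apply Nat.choose_symm_of_eq_add; omega
      have hs2 : (n+j).choose n = (n+j).choose j := Nat.choose_symm_add
      rw [hs, hs2] at h
      rw [mul_comm ((n+1):ℕ)]
      exact h.symm
    have e1' : ((j:ℝ)+1) * ((n+j+1).choose (j+1) : ℝ) = ((n:ℝ)+(j:ℝ)+1) * ((n+j).choose j : ℝ) := by
      exact_mod_cast congrArg (Nat.cast : ℕ → ℝ) e1
    have e2' : ((n:ℝ)+1) * ((n+j+1).choose j : ℝ) = ((n:ℝ)+(j:ℝ)+1) * ((n+j).choose j : ℝ) := by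
      exact_mod_cast congrArg (Nat.cast : ℕ → ℝ) e2
    have hC1 : (0:ℝ) < ((n+j).choose j : ℝ) := by exact_mod_cast Nat.choose_pos (by omega)
    have hC2 : (0:ℝ) < ((n+j+1).choose (j+1) : ℝ) := by exact_mod_cast Nat.choose_pos (by omega)
    have hC3 : (0:ℝ) < ((n+j+1).choose j : ℝ) := by exact_mod_cast Nat.choose_pos (by omega)
    have hj' : (0:ℝ) < (j:ℝ) := by exact_mod_cast hj
    field_simp
    nlinarith [mul_pos hj' hC1, mul_pos hC2 hC3, mul_pos hj' hC3, mul_pos (mul_pos hj' hC1) hC2]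

lemma alt_harmonic (n : ℕ) :
    ∑ m ∈ range (n+1), (-1:ℝ)^m * (n.choose m) / (m:ℝ) = -(harmonicR n) := by
  induction n with
  | zero => simp [harmonicR]
  | succ n ih =>
    have key : ∑ m ∈ range (n+2), (-1:ℝ)^m * ((n+1).choose m) / (m:ℝ)
        = (∑ m ∈ range (n+1), (-1:ℝ)^m * (n.choose m) / (m:ℝ))
          - ∑ k ∈ range (n+1), (-1:ℝ)^k * (n.choose k) / ((k:ℝ) + 1) := by
      rw [Finset.sum_range_succ' (fun m => (-1:ℝ)^m * ((n+1).choose m) / (m:ℝ)) (n+1)]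
      have hsplit : ∀ k ∈ range (n+1),
          (-1:ℝ)^(k+1) * ((n+1).choose (k+1)) / ((k+1:ℕ):ℝ)
          = ((-1:ℝ)^(k+1) * (n.choose (k+1)) / ((k+1:ℕ):ℝ))
            - (-1:ℝ)^k * (n.choose k) / ((k:ℝ) + 1) := by
        intro k _
        rw [Nat.choose_succ_succ]
        push_cast
        ring
      rw [Finset.sum_congr rfl hsplit, Finset.sum_sub_distrib]
      have hlast : ((-1:ℝ)^(n+1) * (n.choose (n+1)) / ((n+1:ℕ):ℝ)) = 0 := by
        simp [Nat.choose_succ_self]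
      have hback : (∑ k ∈ range (n+1), (-1:ℝ)^(k+1) * (n.choose (k+1)) / ((k+1:ℕ):ℝ))
            + (-1:ℝ)^0 * ((n+1).choose 0) / ((0:ℕ):ℝ)
          = ∑ m ∈ range (n+1), (-1:ℝ)^m * (n.choose m) / (m:ℝ) := by
        have hfirst : (-1:ℝ)^0 * ((n+1).choose 0) / ((0:ℕ):ℝ)
            = (-1:ℝ)^0 * (n.choose 0) / ((0:ℕ):ℝ) := by simp
        rw [hfirst,
          ← Finset.sum_range_succ' (fun m => (-1:ℝ)^m * (n.choose m) / (m:ℝ)) (n+1),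
          Finset.sum_range_succ, hlast, add_zero]
      linarith [hback]
    have hb := beta_sum n 1 le_rfl
    push_cast at hb
    rw [key, ih, hb]
    have : harmonicR (n+1) = harmonicR n + 1/((n:ℝ)+1) := by
      simp [harmonicR, Finset.sum_range_succ]
    rw [this]
    have hc : ((n+1).choose 1 : ℝ) = (n:ℝ) + 1 := by
      rw [Nat.choose_one_right]; push_cast; ring
    rw [show (n:ℝ)+1 = ((n+1:ℕ):ℝ) by push_cast; ring] at hc ⊢
    rw [hc]
    ring

lemma main_comb (L : ℕ) :
    ∑ m ∈ range (L+1),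
      ((-1:ℝ)^m * (L.choose m) * (∑ k ∈ range (m+1), ((L.choose k : ℝ) * (m.choose k)))) / (m:ℝ)
      = -2 * harmonicR L := by
  -- extend inner sum to range (L+1)
  have step1 : ∀ m ∈ range (L+1),
      ((-1:ℝ)^m * (L.choose m) * (∑ k ∈ range (m+1), ((L.choose k : ℝ) * (m.choose k)))) / (m:ℝ)
      = ∑ k ∈ range (L+1), ((-1:ℝ)^m * (L.choose m) * ((L.choose k : ℝ) * (m.choose k))) / (m:ℝ) := by
    intro m hm
    rw [mem_range] at hm
    have hsub : range (m+1) ⊆ range (L+1) := by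
      intro x hx; rw [mem_range] at hx ⊢; omega
    rw [show (∑ k ∈ range (m+1), ((L.choose k : ℝ) * (m.choose k)))
        = ∑ k ∈ range (L+1), ((L.choose k : ℝ) * (m.choose k)) from by
      refine Finset.sum_subset hsub fun x _ hx => ?_
      rw [mem_range] at hx
      have : m < x := by rw [mem_range] at *; omega
      rw [Nat.choose_eq_zero_of_lt this]; simp]
    rw [Finset.mul_sum, Finset.sum_div]
  rw [Finset.sum_congr rfl step1, Finset.sum_comm]
  -- now inner sums over m
  have inner0 : ∑ m ∈ range (L+1), ((-1:ℝ)^m * (L.choose m) * ((L.choose 0 : ℝ) * (m.choose 0))) / (m:ℝ)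
      = -(harmonicR L) := by
    rw [← alt_harmonic L]
    refine Finset.sum_congr rfl fun m _ => ?_
    simp
  have innerk : ∀ k, 1 ≤ k → k ≤ L →
      ∑ m ∈ range (L+1), ((-1:ℝ)^m * (L.choose m) * ((L.choose k : ℝ) * (m.choose k))) / (m:ℝ)
      = (L.choose k : ℝ) * ((-1:ℝ)^k / (k:ℝ)) := by
    intro k hk1 hkL
    have hsplit : range (L+1) = range k ∪ Ico k (L+1) := by
      rw [range_eq_Ico, range_eq_Ico, Finset.Ico_union_Ico_eq_Ico (by omega) (by omega)]
    rw [hsplit, Finset.sum_union (by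
      rw [range_eq_Ico]
      exact Finset.Ico_disjoint_Ico_consecutive 0 k (L+1))]
    have hzero : ∑ m ∈ range k, ((-1:ℝ)^m * (L.choose m) * ((L.choose k : ℝ) * (m.choose k))) / (m:ℝ) = 0 := by
      refine Finset.sum_eq_zero fun m hm => ?_
      rw [mem_range] at hm
      rw [Nat.choose_eq_zero_of_lt hm]; simp
    rw [hzero, zero_add]
    rw [Finset.sum_Ico_eq_sum_range]
    have hlen : L + 1 - k = (L - k) + 1 := by omega
    rw [hlen]
    have hterm : ∀ i ∈ range ((L-k)+1),
        ((-1:ℝ)^(k+i) * (L.choose (k+i)) * ((L.choose k : ℝ) * ((k+i).choose k))) / ((k+i : ℕ):ℝ)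
        = ((L.choose k:ℝ) * ((L.choose k:ℝ) * (-1:ℝ)^k)) * ((-1:ℝ)^i * ((L-k).choose i) / ((i:ℝ) + (k:ℝ))) := by
      intro i hi
      rw [mem_range] at hi
      have hmul : L.choose (k+i) * (k+i).choose k = L.choose k * (L-k).choose i := by
        have := Nat.choose_mul (n := L) (k := k+i) (s := k) (by omega)
        simpa using this
      have hmul' : (L.choose (k+i) : ℝ) * ((k+i).choose k : ℝ) = (L.choose k : ℝ) * ((L-k).choose i : ℝ) := by
        exact_mod_cast congrArg (Nat.cast : ℕ → ℝ) hmul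
      push_cast
      rw [pow_add]
      field_simp
      linear_combination (((L.choose k : ℝ))*((i:ℝ)+(k:ℝ))) * hmul'
    rw [Finset.sum_congr rfl hterm, ← Finset.mul_sum]
    rw [beta_sum (L-k) k hk1]
    have hLk : L - k + k = L := by omega
    rw [hLk]
    have hCpos : (0:ℝ) < (L.choose k : ℝ) := by exact_mod_cast Nat.choose_pos hkL
    have hkpos : (0:ℝ) < (k:ℝ) := by exact_mod_cast hk1
    field_simp
  -- assemble outer sum over k
  rw [Finset.sum_range_succ' _ L]
  have houter : ∑ k ∈ range L,
      ∑ m ∈ range (L+1), ((-1:ℝ)^m * (L.choose m) * ((L.choose (k+1) : ℝ) * (m.choose (k+1)))) / (m:ℝ)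
      = ∑ k ∈ range L, (L.choose (k+1) : ℝ) * ((-1:ℝ)^(k+1) / ((k+1:ℕ):ℝ)) := by
    refine Finset.sum_congr rfl fun k hk => ?_
    rw [mem_range] at hk
    exact_mod_cast innerk (k+1) (by omega) (by omega)
  rw [houter, inner0]
  have halt := alt_harmonic L
  rw [Finset.sum_range_succ' _ L] at halt
  have h0 : (-1:ℝ)^0 * (L.choose 0) / ((0:ℕ):ℝ) = 0 := by simp
  rw [h0, add_zero] at halt
  have : ∑ k ∈ range L, (L.choose (k+1) : ℝ) * ((-1:ℝ)^(k+1) / ((k+1:ℕ):ℝ))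
      = ∑ k ∈ range L, (-1:ℝ)^(k+1) * (L.choose (k+1)) / ((k+1:ℕ):ℝ) := by
    refine Finset.sum_congr rfl fun k _ => ?_; ring
  rw [this, halt]
  ring

lemma triangle (n : ℕ) (f : ℕ → ℕ → ℝ) :
    ∑ k ∈ range (n+1), ∑ i ∈ range (n+1-k), f k i
      = ∑ m ∈ range (n+1), ∑ k ∈ range (m+1), f k (m-k) := by
  induction n with
  | zero => simp
  | succ n ih =>
    rw [Finset.sum_range_succ (fun k => ∑ i ∈ range (n+2-k), f k i) (n+1)]
    have hstep : ∀ k ∈ range (n+1), ∑ i ∈ range (n+2-k), f k i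
        = (∑ i ∈ range (n+1-k), f k i) + f k (n+1-k) := by
      intro k hk
      rw [mem_range] at hk
      rw [show n+2-k = (n+1-k)+1 by omega, Finset.sum_range_succ]
    rw [Finset.sum_congr rfl hstep, Finset.sum_add_distrib, ih]
    rw [show n+2-(n+1) = 1 by omega]
    rw [Finset.sum_range_one]
    rw [Finset.sum_range_succ (fun m => ∑ k ∈ range (m+1), f k (m-k)) (n+1)]
    rw [Finset.sum_range_succ (fun k => f k (n+1-k)) (n+1), Nat.sub_self]
    ring

noncomputable def cc (L m : ℕ) : ℝ :=
  (-1:ℝ)^m * (L.choose m) * (∑ k ∈ range (m+1), (L.choose k : ℝ) * (m.choose k)) / 2^m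

lemma legendre_expand (L : ℕ) (u : ℝ) :
    legendreP L (1-u) = ∑ m ∈ range (L+1), cc L m * u^m := by
  rw [legendre_prod]
  have hterm : ∀ k ∈ range (L+1),
      ((L.choose k : ℝ))^2 * (((1-u)-1)/2)^k * (((1-u)+1)/2)^(L-k)
      = ∑ i ∈ range (L+1-k), ((L.choose k : ℝ))^2 * ((L-k).choose i : ℝ) * (-u/2)^(k+i) := by
    intro k hk
    rw [mem_range] at hk
    have hx : (((1-u)+1)/2) = (-u/2) + 1 := by ring
    have hrange : L - k + 1 = L + 1 - k := by omega
    rw [hx, add_pow, ← hrange]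
    rw [Finset.mul_sum]
    refine Finset.sum_congr rfl fun i hi => ?_
    rw [pow_add]
    have : (((1-u)-1)/2)^k = (-u/2)^k := by ring_nf
    rw [this]
    simp only [one_pow, mul_one]
    ring
  rw [Finset.sum_congr rfl hterm]
  rw [triangle L (fun k i => ((L.choose k : ℝ))^2 * ((L-k).choose i : ℝ) * (-u/2)^(k+i))]
  refine Finset.sum_congr rfl fun m hm => ?_
  rw [mem_range] at hm
  have hin : ∀ k ∈ range (m+1),
      ((L.choose k : ℝ))^2 * ((L-k).choose (m-k) : ℝ) * (-u/2)^(k+(m-k))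
      = ((L.choose m : ℝ) * ((L.choose k : ℝ) * (m.choose k))) * (-u/2)^m := by
    intro k hk
    rw [mem_range] at hk
    have hkm : k ≤ m := by omega
    have hcm : L.choose m * m.choose k = L.choose k * (L-k).choose (m-k) :=
      Nat.choose_mul hkm
    have hcm' : (L.choose m : ℝ) * (m.choose k : ℝ) = (L.choose k : ℝ) * ((L-k).choose (m-k) : ℝ) := by
      exact_mod_cast congrArg (Nat.cast : ℕ → ℝ) hcm
    rw [show k+(m-k) = m by omega]
    linear_combination (-(L.choose k : ℝ) * (-u/2)^m) * hcm'
  rw [Finset.sum_congr rfl hin, ← Finset.sum_mul, ← Finset.mul_sum]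
  rw [cc]
  rw [div_pow, neg_pow]
  ring

lemma pow_sub_le (k : ℕ) (a : ℝ) (ha : 0 ≤ a) :
    ((k:ℝ)+1) * a^k ≤ (a+1)^(k+1) - a^(k+1) ∧ (a+1)^(k+1) - a^(k+1) ≤ ((k:ℝ)+1) * (a+1)^k := by
  have hgeom := geom_sum₂_mul (a+1) a (k+1)
  have h1 : (a+1) - a = 1 := by ring
  rw [h1, mul_one] at hgeom
  constructor
  · rw [← hgeom]
    have : ∀ i ∈ range (k+1), a^k ≤ (a+1)^i * a^(k-i) := by
      intro i hi
      rw [mem_range] at hi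
      have h2 : a^i * a^(k-i) ≤ (a+1)^i * a^(k-i) := by
        apply mul_le_mul_of_nonneg_right (pow_le_pow_left₀ ha (by linarith) i) (pow_nonneg ha _)
      have h3 : a^i * a^(k-i) = a^k := by rw [← pow_add]; congr 1; omega
      linarith
    calc ((k:ℝ)+1) * a^k = ∑ _i ∈ range (k+1), a^k := by
          rw [Finset.sum_const, card_range]; push_cast; ring
      _ ≤ ∑ i ∈ range (k+1), (a+1)^i * a^(k+1-1-i) := by
          apply Finset.sum_le_sum
          intro i hi
          rw [show k+1-1-i = k-i from rfl]
          exact this i hi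
  · rw [← hgeom]
    have : ∀ i ∈ range (k+1), (a+1)^i * a^(k-i) ≤ (a+1)^k := by
      intro i hi
      rw [mem_range] at hi
      have h2 : (a+1)^i * a^(k-i) ≤ (a+1)^i * (a+1)^(k-i) := by
        apply mul_le_mul_of_nonneg_left (pow_le_pow_left₀ ha (by linarith) _) (pow_nonneg (by linarith) _)
      have h3 : (a+1)^i * (a+1)^(k-i) = (a+1)^k := by rw [← pow_add]; congr 1; omega
      linarith
    calc ∑ i ∈ range (k+1), (a+1)^i * a^(k+1-1-i) ≤ ∑ _i ∈ range (k+1), (a+1)^k := by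
          apply Finset.sum_le_sum
          intro i hi
          rw [show k+1-1-i = k-i from rfl]
          exact this i hi
      _ = ((k:ℝ)+1) * (a+1)^k := by rw [Finset.sum_const, card_range]; push_cast; ring

lemma sum_pow_upper (k : ℕ) (N : ℕ) :
    ∑ J ∈ range N, (J:ℝ)^k ≤ (N:ℝ)^(k+1)/((k:ℝ)+1) := by
  induction N with
  | zero => simp
  | succ N ih =>
    rw [Finset.sum_range_succ]
    have h := (pow_sub_le k (N:ℝ) (Nat.cast_nonneg N)).1
    have hk : (0:ℝ) < (k:ℝ)+1 := by positivity
    push_cast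
    have h2 : (N:ℝ)^k ≤ (((N:ℝ)+1)^(k+1) - (N:ℝ)^(k+1))/((k:ℝ)+1) := by
      rw [le_div_iff₀ hk]; linarith
    have h3 : (N:ℝ)^(k+1)/((k:ℝ)+1) + (((N:ℝ)+1)^(k+1) - (N:ℝ)^(k+1))/((k:ℝ)+1)
        = ((N:ℝ)+1)^(k+1)/((k:ℝ)+1) := by ring
    linarith
lemma sum_pow_lower (k : ℕ) (N : ℕ) (hN : 1 ≤ N) :
    ((N:ℝ)-1)^(k+1)/((k:ℝ)+1) ≤ ∑ J ∈ range N, (J:ℝ)^k := by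
  induction N with
  | zero => omega
  | succ N ih =>
    rcases Nat.eq_zero_or_pos N with h0 | hpos
    · subst h0
      simp
    · have h := (pow_sub_le k ((N:ℝ)-1) (by
        have : (1:ℝ) ≤ (N:ℝ) := by exact_mod_cast hpos
        linarith)).2
      have hk : (0:ℝ) < (k:ℝ)+1 := by positivity
      rw [Finset.sum_range_succ]
      have ih' := ih hpos
      have hsimp : ((N:ℝ)-1)+1 = (N:ℝ) := by ring
      rw [hsimp] at h
      push_cast
      have hNk : ((N:ℝ))^(k+1) - ((N:ℝ)-1)^(k+1) ≤ ((k:ℝ)+1) * (N:ℝ)^k := by linarith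
      have : ((N:ℝ)+1-1)^(k+1)/((k:ℝ)+1) - ((N:ℝ)-1)^(k+1)/((k:ℝ)+1) ≤ (N:ℝ)^k := by
        rw [div_sub_div_same, div_le_iff₀ hk]
        have : ((N:ℝ)+1-1) = (N:ℝ) := by ring
        rw [this]
        linarith
      linarith

lemma key_tendsto (k : ℕ) :
    Tendsto (fun N : ℕ => (∑ J ∈ range N, (J:ℝ)^k) / (N:ℝ)^(k+1)) atTop
      (nhds (1/((k:ℝ)+1))) := by
  have hk : (0:ℝ) < (k:ℝ)+1 := by positivity
  have hlow : Tendsto (fun N : ℕ => (1 - 1/(N:ℝ))^(k+1) / ((k:ℝ)+1)) atTop (nhds (1/((k:ℝ)+1))) := by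
    have h1 : Tendsto (fun N : ℕ => 1 - 1/(N:ℝ)) atTop (nhds 1) := by
      have := tendsto_one_div_atTop_nhds_zero_nat (𝕜 := ℝ)
      have := tendsto_const_nhds (x := (1:ℝ)) (f := atTop (α := ℕ))
      simpa using Tendsto.sub (tendsto_const_nhds) (tendsto_one_div_atTop_nhds_zero_nat (𝕜 := ℝ))
    have h2 : Tendsto (fun N : ℕ => (1 - 1/(N:ℝ))^(k+1)) atTop (nhds 1) := by
      have := h1.pow (k+1)
      simpa using this
    have := h2.div_const ((k:ℝ)+1)
    simpa using this
  apply tendsto_of_tendsto_of_tendsto_of_le_of_le' hlow tendsto_const_nhds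
  · filter_upwards [eventually_ge_atTop 1] with N hN
    have hNpos : (0:ℝ) < (N:ℝ) := by exact_mod_cast hN
    have hpow : (0:ℝ) < (N:ℝ)^(k+1) := by positivity
    have hlower := sum_pow_lower k N hN
    have e : (1 - 1/(N:ℝ)) = ((N:ℝ)-1)/(N:ℝ) := by field_simp
    rw [e, div_pow]
    calc ((N:ℝ)-1)^(k+1)/(N:ℝ)^(k+1)/((k:ℝ)+1)
        = (((N:ℝ)-1)^(k+1)/((k:ℝ)+1))/(N:ℝ)^(k+1) := by ring
      _ ≤ (∑ J ∈ range N, (J:ℝ)^k) / (N:ℝ)^(k+1) := by gcongr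
  · filter_upwards [eventually_ge_atTop 1] with N hN
    have hNpos : (0:ℝ) < (N:ℝ) := by exact_mod_cast hN
    have hpow : (0:ℝ) < (N:ℝ)^(k+1) := by positivity
    have hupper := sum_pow_upper k N
    rw [div_le_div_iff₀ hpow hk]
    have h2 := mul_le_mul_of_nonneg_right hupper (le_of_lt hk)
    rw [div_mul_cancel₀ _ (ne_of_gt hk)] at h2
    linarith

lemma S_tendsto (μ : ℝ) (hμ : μ ≠ 0) (r : ℕ) :
    Tendsto (fun α : ℕ => ∑ J ∈ range (2*α+1),
      (2*(J:ℝ)+1)/((J:ℝ)*((J:ℝ)+1)+μ^2) * ((J:ℝ)^2/(2*(α:ℝ)^2))^(r+1)) atTop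
      (nhds ((2:ℝ)^(r+1)/((r:ℝ)+1))) := by
  have hμ2 : (0:ℝ) < μ^2 := lt_of_le_of_ne (sq_nonneg μ) (Ne.symm (pow_ne_zero 2 hμ))
  have hden : ∀ J : ℕ, (0:ℝ) < (J:ℝ)*((J:ℝ)+1)+μ^2 := by
    intro J
    have : (0:ℝ) ≤ (J:ℝ)*((J:ℝ)+1) := by positivity
    linarith
  set d : ℕ → ℝ := fun J =>
    (2*(J:ℝ)+1)/((J:ℝ)*((J:ℝ)+1)+μ^2) * (J:ℝ)^(2*r+2) - 2*(J:ℝ)^(2*r+1) with hd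
  have hcomp : Tendsto (fun α : ℕ => 2*α+1) atTop atTop :=
    tendsto_atTop_atTop.2 fun b => ⟨b, fun a ha => by omega⟩
  have hrat : Tendsto (fun α : ℕ => ((2*α+1:ℕ):ℝ)/(α:ℝ)) atTop (nhds 2) := by
    have hbase : Tendsto (fun α : ℕ => 2 + 1/(α:ℝ)) atTop (nhds 2) := by
      simpa using (tendsto_const_nhds (x := (2:ℝ))).add tendsto_one_div_atTop_nhds_zero_nat
    refine Tendsto.congr' ?_ hbase
    filter_upwards [eventually_ge_atTop 1] with α hα
    have hα' : ((α:ℝ)) ≠ 0 := by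
      have : (0:ℝ) < (α:ℝ) := by exact_mod_cast hα
      linarith
    push_cast
    field_simp
  -- part A
  have h1 : Tendsto (fun α : ℕ => (∑ J ∈ range (2*α+1), (J:ℝ)^(2*r+1))/(((2*α+1:ℕ)):ℝ)^((2*r+1)+1))
      atTop (nhds (1/(((2*r+1:ℕ):ℝ)+1))) := (key_tendsto (2*r+1)).comp hcomp
  have h2 : Tendsto (fun α : ℕ => (((2*α+1:ℕ):ℝ)/(α:ℝ))^((2*r+1)+1)) atTop
      (nhds ((2:ℝ)^((2*r+1)+1))) := hrat.pow _
  have hA : Tendsto (fun α : ℕ =>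
      2*(∑ J ∈ range (2*α+1), (J:ℝ)^(2*r+1))/(2^(r+1)*(α:ℝ)^(2*r+2))) atTop
      (nhds ((2:ℝ)^(r+1)/((r:ℝ)+1))) := by
    have hmul := (h1.mul h2).mul_const ((2:ℝ)/2^(r+1))
    have hval : (1/(((2*r+1:ℕ):ℝ)+1)) * ((2:ℝ)^((2*r+1)+1)) * ((2:ℝ)/2^(r+1))
        = (2:ℝ)^(r+1)/((r:ℝ)+1) := by
      push_cast
      have hr : (0:ℝ) < 2*(r:ℝ)+1+1 := by positivity
      have h2r : (2:ℝ)^(2*r+1+1) = 2^(r+1)*2^(r+1) := by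
        rw [← pow_add]; congr 1; omega
      rw [h2r]
      field_simp
      ring
    rw [hval] at hmul
    refine Tendsto.congr' ?_ hmul
    filter_upwards [eventually_ge_atTop 1] with α hα
    have hα' : ((α:ℝ)) ≠ 0 := by
      have : (0:ℝ) < (α:ℝ) := by exact_mod_cast hα
      linarith
    have hN : (((2*α+1:ℕ)):ℝ) ≠ 0 := by positivity
    rw [div_pow]
    have hexp : (α:ℝ)^((2*r+1)+1) = (α:ℝ)^(2*r+2) := by norm_num
    rw [hexp]
    field_simp
  -- part B
  have hdbound : ∀ J : ℕ, |d J| ≤ (1+2*μ^2)*(J:ℝ)^(2*r) := by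
    intro J
    have hdJ : d J = -(((J:ℝ)^(2*r+1)*((J:ℝ)+2*μ^2))/((J:ℝ)*((J:ℝ)+1)+μ^2)) := by
      rw [hd]
      field_simp
      ring
    rw [hdJ, abs_neg, abs_div, abs_of_nonneg (by positivity), abs_of_pos (hden J)]
    rw [div_le_iff₀ (hden J)]
    have hJ0 : (0:ℝ) ≤ (J:ℝ) := Nat.cast_nonneg J
    have e1 : (J:ℝ)^(2*r+1) = (J:ℝ)^(2*r)*(J:ℝ) := by rw [pow_succ]
    rw [e1]
    nlinarith [mul_nonneg (pow_nonneg hJ0 (2*r)) hJ0, mul_nonneg (pow_nonneg hJ0 (2*r)) hμ2.le,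
      mul_nonneg (mul_nonneg (mul_nonneg (pow_nonneg hJ0 (2*r)) hJ0) hJ0) hμ2.le,
      mul_nonneg (pow_nonneg hJ0 (2*r)) (mul_nonneg hμ2.le hμ2.le)]
  have hB : Tendsto (fun α : ℕ => (∑ J ∈ range (2*α+1), d J)/(2^(r+1)*(α:ℝ)^(2*r+2)))
      atTop (nhds 0) := by
    apply squeeze_zero_norm' (a := fun α : ℕ =>
      ((1+2*μ^2)*(((2*α+1:ℕ)):ℝ)^(2*r+1))/(2^(r+1)*(α:ℝ)^(2*r+2)))
    · filter_upwards [eventually_ge_atTop 1] with α hα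
      have hα' : (0:ℝ) < (α:ℝ) := by exact_mod_cast hα
      have hD : (0:ℝ) < 2^(r+1)*(α:ℝ)^(2*r+2) := by positivity
      rw [Real.norm_eq_abs, abs_div, abs_of_pos hD]
      have hnum : |∑ J ∈ range (2*α+1), d J| ≤ (1+2*μ^2)*(((2*α+1:ℕ)):ℝ)^(2*r+1) := by
        calc |∑ J ∈ range (2*α+1), d J| ≤ ∑ J ∈ range (2*α+1), |d J| :=
              Finset.abs_sum_le_sum_abs _ _
          _ ≤ ∑ J ∈ range (2*α+1), (1+2*μ^2)*(J:ℝ)^(2*r) :=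
              Finset.sum_le_sum fun J _ => hdbound J
          _ = (1+2*μ^2) * ∑ J ∈ range (2*α+1), (J:ℝ)^(2*r) := by rw [Finset.mul_sum]
          _ ≤ (1+2*μ^2) * ((((2*α+1:ℕ)):ℝ)^(2*r+1)/(((2*r:ℕ):ℝ)+1)) := by
              apply mul_le_mul_of_nonneg_left (sum_pow_upper (2*r) (2*α+1)) (by positivity)
          _ ≤ (1+2*μ^2)*(((2*α+1:ℕ)):ℝ)^(2*r+1) := by
              apply mul_le_mul_of_nonneg_left ?_ (by positivity)
              apply div_le_self (by positivity)
              have : (0:ℝ) ≤ ((2*r:ℕ):ℝ) := Nat.cast_nonneg _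
              linarith
      exact div_le_div_of_nonneg_right hnum hD.le |>.trans_eq rfl
    · have hb : Tendsto (fun α : ℕ =>
          ((1+2*μ^2)/2^(r+1)) * (((((2*α+1:ℕ)):ℝ)/(α:ℝ))^(2*r+1) * (1/(α:ℝ)))) atTop (nhds 0) := by
        have := ((hrat.pow (2*r+1)).mul tendsto_one_div_atTop_nhds_zero_nat).const_mul
          ((1+2*μ^2)/2^(r+1))
        simpa using this
      refine Tendsto.congr' ?_ hb
      filter_upwards [eventually_ge_atTop 1] with α hα
      have hα' : (0:ℝ) < (α:ℝ) := by exact_mod_cast hα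
      rw [div_pow]
      have hexp : (α:ℝ)^(2*r+2) = (α:ℝ)^(2*r+1)*(α:ℝ) := by rw [pow_succ]
      rw [hexp]
      field_simp
  -- combine
  have heq : ∀ α : ℕ, (∑ J ∈ range (2*α+1),
        (2*(J:ℝ)+1)/((J:ℝ)*((J:ℝ)+1)+μ^2) * ((J:ℝ)^2/(2*(α:ℝ)^2))^(r+1))
      = 2*(∑ J ∈ range (2*α+1), (J:ℝ)^(2*r+1))/(2^(r+1)*(α:ℝ)^(2*r+2))
        + (∑ J ∈ range (2*α+1), d J)/(2^(r+1)*(α:ℝ)^(2*r+2)) := by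
    intro α
    have hterm : ∀ J ∈ range (2*α+1),
        (2*(J:ℝ)+1)/((J:ℝ)*((J:ℝ)+1)+μ^2) * ((J:ℝ)^2/(2*(α:ℝ)^2))^(r+1)
        = (2*(J:ℝ)^(2*r+1) + d J)/(2^(r+1)*(α:ℝ)^(2*r+2)) := by
      intro J _
      have hpow : ((J:ℝ)^2/(2*(α:ℝ)^2))^(r+1) = (J:ℝ)^(2*r+2)/(2^(r+1)*(α:ℝ)^(2*r+2)) := by
        rw [div_pow, mul_pow, ← pow_mul, ← pow_mul]
        rw [show 2*(r+1) = 2*r+2 by omega]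
      rw [hpow, hd]
      ring
    rw [Finset.sum_congr rfl hterm, ← Finset.sum_div, Finset.sum_add_distrib, ← Finset.mul_sum,
      add_div]
  have hfinal := hA.add hB
  rw [add_zero] at hfinal
  exact Tendsto.congr (fun α => (heq α).symm) hfinal

theorem nonplanar_difference_limit (L : ℕ) (μ : ℝ) (hμ : μ ≠ 0) :
    Tendsto (fun α : ℕ =>
        ∑ J ∈ Finset.range (2 * α + 1),
          (2 * (J : ℝ) + 1) / ((J : ℝ) * ((J : ℝ) + 1) + μ ^ 2) *
            (legendreP L (1 - (J : ℝ) ^ 2 / (2 * (α : ℝ) ^ 2)) - 1))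
      atTop (nhds (-2 * harmonicR L)) := by
  have hexp : ∀ u : ℝ, legendreP L (1-u) - 1 = ∑ m ∈ range L, cc L (m+1) * u^(m+1) := by
    intro u
    rw [legendre_expand]
    rw [Finset.sum_range_succ' (fun m => cc L m * u^m) L]
    have hcc0 : cc L 0 = 1 := by simp [cc]
    rw [hcc0]
    simp
  have hFeq : ∀ α : ℕ, (∑ J ∈ Finset.range (2 * α + 1),
          (2 * (J : ℝ) + 1) / ((J : ℝ) * ((J : ℝ) + 1) + μ ^ 2) *
            (legendreP L (1 - (J : ℝ) ^ 2 / (2 * (α : ℝ) ^ 2)) - 1))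
      = ∑ m ∈ range L, cc L (m+1) * (∑ J ∈ range (2*α+1),
          (2*(J:ℝ)+1)/((J:ℝ)*((J:ℝ)+1)+μ^2) * ((J:ℝ)^2/(2*(α:ℝ)^2))^(m+1)) := by
    intro α
    have h1 : ∀ J ∈ range (2*α+1),
        (2 * (J : ℝ) + 1) / ((J : ℝ) * ((J : ℝ) + 1) + μ ^ 2) *
            (legendreP L (1 - (J : ℝ) ^ 2 / (2 * (α : ℝ) ^ 2)) - 1)
        = ∑ m ∈ range L, cc L (m+1) *
            ((2*(J:ℝ)+1)/((J:ℝ)*((J:ℝ)+1)+μ^2) * ((J:ℝ)^2/(2*(α:ℝ)^2))^(m+1)) := by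
      intro J _
      rw [hexp, Finset.mul_sum]
      refine Finset.sum_congr rfl fun m _ => ?_
      ring
    rw [Finset.sum_congr rfl h1, Finset.sum_comm]
    refine Finset.sum_congr rfl fun m _ => ?_
    rw [Finset.mul_sum]
  have hlim : Tendsto (fun α : ℕ => ∑ m ∈ range L, cc L (m+1) * (∑ J ∈ range (2*α+1),
          (2*(J:ℝ)+1)/((J:ℝ)*((J:ℝ)+1)+μ^2) * ((J:ℝ)^2/(2*(α:ℝ)^2))^(m+1))) atTop
      (nhds (∑ m ∈ range L, cc L (m+1) * ((2:ℝ)^(m+1)/((m:ℝ)+1)))) := by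
    apply tendsto_finset_sum
    intro m _
    exact (S_tendsto μ hμ m).const_mul _
  have hval : ∑ m ∈ range L, cc L (m+1) * ((2:ℝ)^(m+1)/((m:ℝ)+1)) = -2 * harmonicR L := by
    rw [← main_comb L]
    rw [Finset.sum_range_succ' (fun m => ((-1:ℝ)^m * (L.choose m) *
      (∑ k ∈ range (m+1), ((L.choose k : ℝ) * (m.choose k)))) / (m:ℝ)) L]
    have h0 : ((-1:ℝ)^0 * (L.choose 0) *
        (∑ k ∈ range (0+1), ((L.choose k : ℝ) * ((0:ℕ).choose k)))) / ((0:ℕ):ℝ) = 0 := by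
      norm_num
    rw [h0, add_zero]
    refine Finset.sum_congr rfl fun m _ => ?_
    rw [cc]
    have h2 : ((2:ℝ))^(m+1) ≠ 0 := by positivity
    have h3 : ((m:ℝ)+1) ≠ 0 := by positivity
    push_cast
    field_simp
  rw [← hval]
  exact Tendsto.congr (fun α => (hFeq α).symm) hlim
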